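/- The group PGL₂(ℂ)×PGL₂(ℂ) acts transitively on the open locus U ⊂ P(V_{1,2}) of smooth curves of bidegree (1,2) on P¹×P¹. Moreover, the stabilizer G in PGL₂×PGL₂ of the curve C = {X₁Y₂² + Y₁X₂² = 0} ∈ U is isomorphic to the semidirect product (ℤ/2ℤ) ⋉ ℂ^×, where the generator of ℤ/2ℤ acts by [X_i, Y_i] ↦ [Y_i, X_i] on both factors, and α ∈ ℂ^× acts by [X₁, Y₁] ↦ [X₁, α²Y₁] and [X₂, Y₂] ↦ [X₂, αY₂]. -/

import Mathlib

set_option synthInstance.maxHeartbeats 1000000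
set_option maxHeartbeats 1000000
noncomputable section
open MvPolynomial

abbrev SL2 := Matrix.SpecialLinearGroup (Fin 2) ℂ

/-- The action of `(g,h) ∈ SL₂ × SL₂` on polynomials in the bihomogeneous coordinates
`([X₁,Y₁],[X₂,Y₂])` of `P¹ × P¹`. -/
def biSubst (g h : SL2) :
    MvPolynomial (Fin 2 ⊕ Fin 2) ℂ →ₐ[ℂ] MvPolynomial (Fin 2 ⊕ Fin 2) ℂ :=
  aeval (Sum.elim (fun i => ∑ j, C (g.1 i j) * X (Sum.inl j))
    (fun i => ∑ j, C (h.1 i j) * X (Sum.inr j)))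

/-- `F` is bihomogeneous of bidegree `(a, b)`. -/
def IsBihom (a b : ℕ) (F : MvPolynomial (Fin 2 ⊕ Fin 2) ℂ) : Prop :=
  ∀ d ∈ F.support, d (Sum.inl 0) + d (Sum.inl 1) = a ∧ d (Sum.inr 0) + d (Sum.inr 1) = b

/-- The curve `{F = 0} ⊂ P¹ × P¹` is smooth. -/
def SmoothCurve (F : MvPolynomial (Fin 2 ⊕ Fin 2) ℂ) : Prop :=
  ∀ x : Fin 2 ⊕ Fin 2 → ℂ,
    ¬(x (Sum.inl 0) = 0 ∧ x (Sum.inl 1) = 0) →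
    ¬(x (Sum.inr 0) = 0 ∧ x (Sum.inr 1) = 0) →
    eval x F = 0 → ∃ v, eval x (pderiv v F) ≠ 0

/-- The bidegree `(1,2)` curve `C₀ = {X₁Y₂² + Y₁X₂² = 0}`. -/
def C₀ : MvPolynomial (Fin 2 ⊕ Fin 2) ℂ :=
  X (Sum.inl 0) * X (Sum.inr 1) ^ 2 + X (Sum.inl 1) * X (Sum.inr 0) ^ 2

def Fp (a₀ a₁ a₂ b₀ b₁ b₂ : ℂ) : MvPolynomial (Fin 2 ⊕ Fin 2) ℂ :=
  C a₀ * (X (Sum.inl 0) * X (Sum.inr 0) ^ 2) +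
  C a₁ * (X (Sum.inl 0) * (X (Sum.inr 0) * X (Sum.inr 1))) +
  C a₂ * (X (Sum.inl 0) * X (Sum.inr 1) ^ 2) +
  C b₀ * (X (Sum.inl 1) * X (Sum.inr 0) ^ 2) +
  C b₁ * (X (Sum.inl 1) * (X (Sum.inr 0) * X (Sum.inr 1))) +
  C b₂ * (X (Sum.inl 1) * X (Sum.inr 1) ^ 2)

def Qd (p q r u v : ℂ) : ℂ := p * u ^ 2 + q * (u * v) + r * v ^ 2

lemma eval_Fp (a₀ a₁ a₂ b₀ b₁ b₂ : ℂ) (x : Fin 2 ⊕ Fin 2 → ℂ) :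
    eval x (Fp a₀ a₁ a₂ b₀ b₁ b₂) =
      x (Sum.inl 0) * Qd a₀ a₁ a₂ (x (Sum.inr 0)) (x (Sum.inr 1)) +
      x (Sum.inl 1) * Qd b₀ b₁ b₂ (x (Sum.inr 0)) (x (Sum.inr 1)) := by
  simp only [Fp, Qd, eval_add, eval_mul, eval_pow, eval_C, eval_X]
  try ring

lemma C₀_eq : C₀ = Fp 0 0 1 1 0 0 := by
  simp only [C₀, Fp, map_zero, map_one, zero_mul, one_mul, add_zero, zero_add]
  try ring

lemma eval_biSubst (g h : SL2) (p : MvPolynomial (Fin 2 ⊕ Fin 2) ℂ) (x : Fin 2 ⊕ Fin 2 → ℂ) :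
    eval x (biSubst g h p) =
      eval (Sum.elim (fun i => g.1 i 0 * x (Sum.inl 0) + g.1 i 1 * x (Sum.inl 1))
        (fun i => h.1 i 0 * x (Sum.inr 0) + h.1 i 1 * x (Sum.inr 1))) p := by
  have h1 : biSubst g h p = bind₁ (Sum.elim (fun i => ∑ j, C (g.1 i j) * X (Sum.inl j))
      (fun i => ∑ j, C (h.1 i j) * X (Sum.inr j))) p := rfl
  have e : ∀ (y : Fin 2 ⊕ Fin 2 → ℂ) (q : MvPolynomial (Fin 2 ⊕ Fin 2) ℂ),
      aeval y q = eval y q := fun y q => rfl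
  rw [h1, ← e, aeval_bind₁, ← e]
  have hs : (fun i => (aeval x)
        (Sum.elim (fun i => ∑ j, C (g.1 i j) * X (Sum.inl j))
          (fun i => ∑ j, C (h.1 i j) * X (Sum.inr j)) i)) =
      (Sum.elim (fun i => g.1 i 0 * x (Sum.inl 0) + g.1 i 1 * x (Sum.inl 1))
        (fun i => h.1 i 0 * x (Sum.inr 0) + h.1 i 1 * x (Sum.inr 1)) :
        Fin 2 ⊕ Fin 2 → ℂ) := by
    funext i
    rcases i with i | i <;> simp [Fin.sum_univ_two]
  rw [hs]

lemma biSubst_biSubst (g h g' h' : SL2) (p : MvPolynomial (Fin 2 ⊕ Fin 2) ℂ) :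
    biSubst g h (biSubst g' h' p) = biSubst (g' * g) (h' * h) p := by
  show bind₁ _ (bind₁ _ p) = bind₁ _ p
  rw [bind₁_bind₁]
  have hs : (fun i => (bind₁ (Sum.elim (fun i => ∑ j, C (g.1 i j) * X (Sum.inl j))
        (fun i => ∑ j, C (h.1 i j) * X (Sum.inr j))))
        (Sum.elim (fun i => ∑ j, C (g'.1 i j) * X (Sum.inl j))
        (fun i => ∑ j, C (h'.1 i j) * X (Sum.inr j)) i)) =
      (Sum.elim (fun i => ∑ j, C ((g' * g).1 i j) * X (Sum.inl j))
        (fun i => ∑ j, C ((h' * h).1 i j) * X (Sum.inr j)) :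
        Fin 2 ⊕ Fin 2 → MvPolynomial (Fin 2 ⊕ Fin 2) ℂ) := by
    funext i
    rcases i with i | i <;>
      simp [Fin.sum_univ_two, Matrix.SpecialLinearGroup.coe_mul, Matrix.mul_apply] <;> ring
  rw [hs]

lemma biSubst_one (p : MvPolynomial (Fin 2 ⊕ Fin 2) ℂ) : biSubst 1 1 p = p := by
  show bind₁ _ p = p
  have : (Sum.elim (fun i => ∑ j, C (((1 : SL2)).1 i j) * X (Sum.inl j))
      (fun i => ∑ j, C (((1 : SL2)).1 i j) * X (Sum.inr j)) :
      Fin 2 ⊕ Fin 2 → MvPolynomial (Fin 2 ⊕ Fin 2) ℂ) = X := by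
    funext i
    rcases i with i | i <;> fin_cases i <;>
      simp [Fin.sum_univ_two, Matrix.SpecialLinearGroup.coe_one, Matrix.one_apply]
  rw [this, bind₁_X_left, AlgHom.id_apply]

def cp0 (p q r h00 h01 h10 h11 : ℂ) : ℂ := p*h00^2 + q*(h00*h10) + r*h10^2
def cp1 (p q r h00 h01 h10 h11 : ℂ) : ℂ :=
  2*p*(h00*h01) + q*(h00*h11 + h01*h10) + 2*r*(h10*h11)
def cp2 (p q r h00 h01 h10 h11 : ℂ) : ℂ := p*h01^2 + q*(h01*h11) + r*h11^2

lemma biSubst_Fp (g h : SL2) (a₀ a₁ a₂ b₀ b₁ b₂ : ℂ) :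
    biSubst g h (Fp a₀ a₁ a₂ b₀ b₁ b₂) =
      Fp (g.1 0 0 * cp0 a₀ a₁ a₂ (h.1 0 0) (h.1 0 1) (h.1 1 0) (h.1 1 1)
            + g.1 1 0 * cp0 b₀ b₁ b₂ (h.1 0 0) (h.1 0 1) (h.1 1 0) (h.1 1 1))
         (g.1 0 0 * cp1 a₀ a₁ a₂ (h.1 0 0) (h.1 0 1) (h.1 1 0) (h.1 1 1)
            + g.1 1 0 * cp1 b₀ b₁ b₂ (h.1 0 0) (h.1 0 1) (h.1 1 0) (h.1 1 1))
         (g.1 0 0 * cp2 a₀ a₁ a₂ (h.1 0 0) (h.1 0 1) (h.1 1 0) (h.1 1 1)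
            + g.1 1 0 * cp2 b₀ b₁ b₂ (h.1 0 0) (h.1 0 1) (h.1 1 0) (h.1 1 1))
         (g.1 0 1 * cp0 a₀ a₁ a₂ (h.1 0 0) (h.1 0 1) (h.1 1 0) (h.1 1 1)
            + g.1 1 1 * cp0 b₀ b₁ b₂ (h.1 0 0) (h.1 0 1) (h.1 1 0) (h.1 1 1))
         (g.1 0 1 * cp1 a₀ a₁ a₂ (h.1 0 0) (h.1 0 1) (h.1 1 0) (h.1 1 1)
            + g.1 1 1 * cp1 b₀ b₁ b₂ (h.1 0 0) (h.1 0 1) (h.1 1 0) (h.1 1 1))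
         (g.1 0 1 * cp2 a₀ a₁ a₂ (h.1 0 0) (h.1 0 1) (h.1 1 0) (h.1 1 1)
            + g.1 1 1 * cp2 b₀ b₁ b₂ (h.1 0 0) (h.1 0 1) (h.1 1 0) (h.1 1 1)) := by
  apply MvPolynomial.funext
  intro x
  rw [eval_biSubst, eval_Fp, eval_Fp]
  simp only [Sum.elim_inl, Sum.elim_inr, Qd, cp0, cp1, cp2]
  ring

lemma Fp_smul (c a₀ a₁ a₂ b₀ b₁ b₂ : ℂ) :
    c • Fp a₀ a₁ a₂ b₀ b₁ b₂ = Fp (c*a₀) (c*a₁) (c*a₂) (c*b₀) (c*b₁) (c*b₂) := by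
  apply MvPolynomial.funext
  intro x
  rw [smul_eval, eval_Fp, eval_Fp]
  simp only [Qd]
  ring

lemma Fp_inj {a₀ a₁ a₂ b₀ b₁ b₂ a₀' a₁' a₂' b₀' b₁' b₂' : ℂ}
    (h : Fp a₀ a₁ a₂ b₀ b₁ b₂ = Fp a₀' a₁' a₂' b₀' b₁' b₂') :
    a₀ = a₀' ∧ a₁ = a₁' ∧ a₂ = a₂' ∧ b₀ = b₀' ∧ b₁ = b₁' ∧ b₂ = b₂' := by
  have key : ∀ u₁ v₁ u₂ v₂ : ℂ,
      u₁ * Qd a₀ a₁ a₂ u₂ v₂ + v₁ * Qd b₀ b₁ b₂ u₂ v₂ =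
      u₁ * Qd a₀' a₁' a₂' u₂ v₂ + v₁ * Qd b₀' b₁' b₂' u₂ v₂ := by
    intro u₁ v₁ u₂ v₂
    have := congrArg (eval (Sum.elim ![u₁, v₁] ![u₂, v₂])) h
    rw [eval_Fp, eval_Fp] at this
    simpa using this
  have h1 := key 1 0 1 0
  have h2 := key 1 0 0 1
  have h3 := key 1 0 1 1
  have h4 := key 0 1 1 0
  have h5 := key 0 1 0 1
  have h6 := key 0 1 1 1
  norm_num [Qd] at h1 h2 h3 h4 h5 h6
  exact ⟨h1, by linear_combination h3 - h1 - h2, h2, h4,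
    by linear_combination h6 - h4 - h5, h5⟩

def NCR (a₀ a₁ a₂ b₀ b₁ b₂ : ℂ) : Prop :=
  ∀ u v : ℂ, ¬(u = 0 ∧ v = 0) → ¬(Qd a₀ a₁ a₂ u v = 0 ∧ Qd b₀ b₁ b₂ u v = 0)

lemma exists_sqrt (z : ℂ) : ∃ w : ℂ, w ^ 2 = z :=
  IsAlgClosed.exists_pow_nat_eq z (by norm_num)

lemma quad_root (p q r : ℂ) : ∃ u v : ℂ, ¬(u = 0 ∧ v = 0) ∧ Qd p q r u v = 0 := by
  by_cases hp : p = 0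
  · exact ⟨1, 0, by simp, by simp [Qd, hp]⟩
  · obtain ⟨d, hd⟩ := exists_sqrt (q ^ 2 - 4 * (p * r))
    refine ⟨(-q + d) / (2 * p), 1, by simp, ?_⟩
    simp only [Qd]
    field_simp
    linear_combination hd

lemma sq_of_disc {p q r : ℂ} (h : q ^ 2 = 4 * (p * r)) :
    ∃ α β : ℂ, p = α ^ 2 ∧ q = 2 * (α * β) ∧ r = β ^ 2 := by
  by_cases hp : p = 0
  · have hq : q = 0 := by
      have : q ^ 2 = 0 := by rw [h, hp]; ring
      exact pow_eq_zero_iff (n := 2) (by norm_num) |>.mp this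
    obtain ⟨β, hβ⟩ := exists_sqrt r
    exact ⟨0, β, by simp [hp], by simp [hq], hβ.symm⟩
  · obtain ⟨α, hα⟩ := exists_sqrt p
    have hα0 : α ≠ 0 := fun h0 => hp (by rw [← hα, h0]; ring)
    refine ⟨α, q / (2 * α), hα.symm, by field_simp, ?_⟩
    field_simp
    linear_combination 4 * r * hα - h

lemma pencil_sq {a₀ a₁ a₂ b₀ b₁ b₂ : ℂ} (h : NCR a₀ a₁ a₂ b₀ b₁ b₂) :
    ∃ s t α β : ℂ, ¬(s = 0 ∧ t = 0) ∧ ¬(α = 0 ∧ β = 0) ∧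
      s * a₀ + t * b₀ = α ^ 2 ∧ s * a₁ + t * b₁ = 2 * (α * β) ∧ s * a₂ + t * b₂ = β ^ 2 := by
  obtain ⟨s, t, hst, hroot⟩ := quad_root (a₁ ^ 2 - 4 * (a₀ * a₂))
    (2 * (a₁ * b₁) - 4 * (a₀ * b₂) - 4 * (a₂ * b₀)) (b₁ ^ 2 - 4 * (b₀ * b₂))
  have hdisc : (s * a₁ + t * b₁) ^ 2 = 4 * ((s * a₀ + t * b₀) * (s * a₂ + t * b₂)) := by
    simp only [Qd] at hroot
    linear_combination hroot
  obtain ⟨α, β, h0, h1, h2⟩ := sq_of_disc hdisc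
  refine ⟨s, t, α, β, hst, ?_, h0, h1, h2⟩
  rintro ⟨hα, hβ⟩
  subst hα; subst hβ
  -- s*a_i + t*b_i = 0 for all i
  have e0 : s * a₀ + t * b₀ = 0 := by rw [h0]; ring
  have e1 : s * a₁ + t * b₁ = 0 := by rw [h1]; ring
  have e2 : s * a₂ + t * b₂ = 0 := by rw [h2]; ring
  by_cases hs : s = 0
  · have ht : t ≠ 0 := fun h' => hst ⟨hs, h'⟩
    have hb0 : b₀ = 0 := by rw [hs] at e0; simpa [ht] using e0
    have hb1 : b₁ = 0 := by rw [hs] at e1; simpa [ht] using e1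
    have hb2 : b₂ = 0 := by rw [hs] at e2; simpa [ht] using e2
    obtain ⟨u, v, huv, hu⟩ := quad_root a₀ a₁ a₂
    exact h u v huv ⟨hu, by simp [Qd, hb0, hb1, hb2]⟩
  · obtain ⟨u, v, huv, hu⟩ := quad_root b₀ b₁ b₂
    refine h u v huv ⟨?_, hu⟩
    have : s * Qd a₀ a₁ a₂ u v + t * Qd b₀ b₁ b₂ u v = 0 := by
      simp only [Qd]; linear_combination u^2 * e0 + (u*v) * e1 + v^2 * e2
    rw [hu, mul_zero, add_zero] at this
    exact (mul_eq_zero.mp this).resolve_left hs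

lemma det_entries (g : SL2) : g.1 0 0 * g.1 1 1 - g.1 0 1 * g.1 1 0 = 1 := by
  have := g.2
  rwa [Matrix.det_fin_two] at this

lemma NCR_transport (g h : SL2) {a₀ a₁ a₂ b₀ b₁ b₂ a₀' a₁' a₂' b₀' b₁' b₂' : ℂ}
    (heq : biSubst g h (Fp a₀ a₁ a₂ b₀ b₁ b₂) = Fp a₀' a₁' a₂' b₀' b₁' b₂')
    (hn : NCR a₀ a₁ a₂ b₀ b₁ b₂) : NCR a₀' a₁' a₂' b₀' b₁' b₂' := by
  intro u v huv hq
  obtain ⟨hq0, hq1⟩ := hq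
  set w0 := h.1 0 0 * u + h.1 0 1 * v with hw0
  set w1 := h.1 1 0 * u + h.1 1 1 * v with hw1
  have hdh := det_entries h
  have hdg := det_entries g
  have hw : ¬(w0 = 0 ∧ w1 = 0) := by
    rintro ⟨e0, e1⟩
    refine huv ⟨?_, ?_⟩
    · linear_combination h.1 1 1 * e0 - h.1 0 1 * e1 - u * hdh
    · linear_combination h.1 0 0 * e1 - h.1 1 0 * e0 - v * hdh
  have E : ∀ u₁ v₁ : ℂ,
      (g.1 0 0 * u₁ + g.1 0 1 * v₁) * Qd a₀ a₁ a₂ w0 w1 +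
      (g.1 1 0 * u₁ + g.1 1 1 * v₁) * Qd b₀ b₁ b₂ w0 w1 =
      u₁ * Qd a₀' a₁' a₂' u v + v₁ * Qd b₀' b₁' b₂' u v := by
    intro u₁ v₁
    have := congrArg (eval (Sum.elim ![u₁, v₁] ![u, v])) heq
    rw [eval_biSubst, eval_Fp, eval_Fp] at this
    simpa using this
  have E1 := E 1 0
  have E2 := E 0 1
  rw [hq0, hq1] at E1 E2
  simp only [mul_zero, add_zero, mul_one, mul_zero, zero_mul] at E1 E2
  refine hn w0 w1 hw ⟨?_, ?_⟩
  · linear_combination g.1 1 1 * E1 - g.1 1 0 * E2 - Qd a₀ a₁ a₂ w0 w1 * hdg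
  · linear_combination g.1 0 0 * E2 - g.1 0 1 * E1 - Qd b₀ b₁ b₂ w0 w1 * hdg

lemma eval_pderiv_Fp (a₀ a₁ a₂ b₀ b₁ b₂ : ℂ) (x : Fin 2 ⊕ Fin 2 → ℂ) :
    eval x (pderiv (Sum.inl 0) (Fp a₀ a₁ a₂ b₀ b₁ b₂)) =
        Qd a₀ a₁ a₂ (x (Sum.inr 0)) (x (Sum.inr 1)) ∧
    eval x (pderiv (Sum.inl 1) (Fp a₀ a₁ a₂ b₀ b₁ b₂)) =
        Qd b₀ b₁ b₂ (x (Sum.inr 0)) (x (Sum.inr 1)) ∧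
    eval x (pderiv (Sum.inr 0) (Fp a₀ a₁ a₂ b₀ b₁ b₂)) =
        x (Sum.inl 0) * (2*a₀*(x (Sum.inr 0)) + a₁*(x (Sum.inr 1))) +
        x (Sum.inl 1) * (2*b₀*(x (Sum.inr 0)) + b₁*(x (Sum.inr 1))) ∧
    eval x (pderiv (Sum.inr 1) (Fp a₀ a₁ a₂ b₀ b₁ b₂)) =
        x (Sum.inl 0) * (a₁*(x (Sum.inr 0)) + 2*a₂*(x (Sum.inr 1))) +
        x (Sum.inl 1) * (b₁*(x (Sum.inr 0)) + 2*b₂*(x (Sum.inr 1))) := by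
  refine ⟨?_, ?_, ?_, ?_⟩ <;>
  · simp [Fp, Qd, pderiv_mul, pderiv_C_mul, pderiv_X, Pi.single_apply]
    try ring

lemma smooth_NCR {a₀ a₁ a₂ b₀ b₁ b₂ : ℂ}
    (hs : SmoothCurve (Fp a₀ a₁ a₂ b₀ b₁ b₂)) : NCR a₀ a₁ a₂ b₀ b₁ b₂ := by
  intro u v huv hq
  obtain ⟨h0, h1⟩ := hq
  simp only [Qd] at h0 h1
  set M00 := 2*a₀*u + a₁*v with hM00
  set M01 := a₁*u + 2*a₂*v with hM01
  set M10 := 2*b₀*u + b₁*v with hM10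
  set M11 := b₁*u + 2*b₂*v with hM11
  have eu : M00 * u + M01 * v = 0 := by rw [hM00, hM01]; linear_combination 2 * h0
  have ev : M10 * u + M11 * v = 0 := by rw [hM10, hM11]; linear_combination 2 * h1
  have hdet : M00 * M11 - M01 * M10 = 0 := by
    have d1 : (M00 * M11 - M01 * M10) * u = 0 := by linear_combination M11 * eu - M01 * ev
    have d2 : (M00 * M11 - M01 * M10) * v = 0 := by linear_combination M00 * ev - M10 * eu
    by_cases hu : u = 0
    · have hv : v ≠ 0 := fun h' => huv ⟨hu, h'⟩
      exact (mul_eq_zero.mp d2).resolve_right hv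
    · exact (mul_eq_zero.mp d1).resolve_right hu
  obtain ⟨s, t, hst, hA, hB⟩ : ∃ s t : ℂ, ¬(s = 0 ∧ t = 0) ∧
      s * M00 + t * M10 = 0 ∧ s * M01 + t * M11 = 0 := by
    by_cases hM : M00 = 0 ∧ M10 = 0
    · by_cases hM' : M01 = 0 ∧ M11 = 0
      · exact ⟨1, 0, by simp, by simp [hM.1, hM.2], by simp [hM'.1, hM'.2]⟩
      · refine ⟨M11, -M01, ?_, by rw [hM.1, hM.2]; ring, by ring⟩
        rintro ⟨e1, e2⟩
        exact hM' ⟨by linear_combination -e2, e1⟩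
    · refine ⟨M10, -M00, ?_, by ring, by linear_combination -hdet⟩
      rintro ⟨e1, e2⟩
      exact hM ⟨by linear_combination -e2, e1⟩
  have hx := hs (Sum.elim ![s, t] ![u, v]) (by simpa using hst) (by simpa using huv)
  rw [eval_Fp] at hx
  obtain ⟨w, hw⟩ := hx (by
    simp only [Sum.elim_inl, Sum.elim_inr, Matrix.cons_val_zero, Matrix.cons_val_one,
      Matrix.head_cons, Qd]
    linear_combination s * h0 + t * h1)
  obtain ⟨P0, P1, P2, P3⟩ := eval_pderiv_Fp a₀ a₁ a₂ b₀ b₁ b₂ (Sum.elim ![s, t] ![u, v])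
  simp only [Sum.elim_inl, Sum.elim_inr, Matrix.cons_val_zero, Matrix.cons_val_one,
    Matrix.head_cons] at P0 P1 P2 P3
  rcases w with w | w <;> fin_cases w <;> apply hw
  · exact P0.trans (by simp only [Qd]; linear_combination h0)
  · exact P1.trans (by simp only [Qd]; linear_combination h1)
  · exact P2.trans (by linear_combination hA)
  · exact P3.trans (by linear_combination hB)

def Dexp (k : Fin 2) (m n : ℕ) : (Fin 2 ⊕ Fin 2) →₀ ℕ :=
  Finsupp.single (Sum.inl k) 1 + Finsupp.single (Sum.inr 0) m + Finsupp.single (Sum.inr 1) n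

lemma Dexp_apply_inl (k : Fin 2) (m n : ℕ) (j : Fin 2) :
    Dexp k m n (Sum.inl j) = if k = j then 1 else 0 := by
  simp [Dexp, Finsupp.single_apply]

lemma Dexp_apply_inr0 (k : Fin 2) (m n : ℕ) : Dexp k m n (Sum.inr 0) = m := by
  simp [Dexp, Finsupp.single_apply]

lemma Dexp_apply_inr1 (k : Fin 2) (m n : ℕ) : Dexp k m n (Sum.inr 1) = n := by
  simp [Dexp, Finsupp.single_apply, Fin.ext_iff]

lemma monomial_Dexp (k : Fin 2) (m n : ℕ) (c : ℂ) :
    (monomial (Dexp k m n) c : MvPolynomial (Fin 2 ⊕ Fin 2) ℂ) =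
      C c * (X (Sum.inl k) * (X (Sum.inr 0) ^ m * X (Sum.inr 1) ^ n)) := by
  rw [C_apply, X, X_pow_eq_monomial, X_pow_eq_monomial, monomial_mul, monomial_mul,
    monomial_mul, Dexp]
  simp [add_assoc]

lemma Dexp_eq_iff {k k' : Fin 2} {m n m' n' : ℕ} :
    Dexp k m n = Dexp k' m' n' ↔ k = k' ∧ m = m' ∧ n = n' := by
  constructor
  · intro h
    have h0 := DFunLike.congr_fun h (Sum.inl k)
    have h1 := DFunLike.congr_fun h (Sum.inr 0)
    have h2 := DFunLike.congr_fun h (Sum.inr 1)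
    rw [Dexp_apply_inr0, Dexp_apply_inr0] at h1
    rw [Dexp_apply_inr1, Dexp_apply_inr1] at h2
    rw [Dexp_apply_inl, Dexp_apply_inl, if_pos rfl] at h0
    refine ⟨?_, h1, h2⟩
    by_contra hne
    rw [if_neg (fun h' => hne h'.symm)] at h0
    exact one_ne_zero h0
  · rintro ⟨rfl, rfl, rfl⟩; rfl

lemma support_classify {F : MvPolynomial (Fin 2 ⊕ Fin 2) ℂ} (hF : IsBihom 1 2 F)
    {d : (Fin 2 ⊕ Fin 2) →₀ ℕ} (hd : d ∈ F.support) :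
    d = Dexp 0 2 0 ∨ d = Dexp 0 1 1 ∨ d = Dexp 0 0 2 ∨
    d = Dexp 1 2 0 ∨ d = Dexp 1 1 1 ∨ d = Dexp 1 0 2 := by
  obtain ⟨h1, h2⟩ := hF d hd
  have hext : ∀ (k k' : Fin 2) (m n : ℕ), k ≠ k' → d (Sum.inl k) = 1 → d (Sum.inl k') = 0 →
      d (Sum.inr 0) = m → d (Sum.inr 1) = n → d = Dexp k m n := by
    intro k k' m n hkk' e1 e2 e3 e4
    ext i
    rcases i with j | j
    · rw [Dexp_apply_inl]
      by_cases hkj : k = j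
      · rw [if_pos hkj, ← hkj]; exact e1
      · rw [if_neg hkj]
        have hj : j = k' := by
          fin_cases k <;> fin_cases k' <;> fin_cases j <;>
            first | rfl | simp_all | (exact absurd rfl hkj) | (exact absurd rfl hkk')
        rw [hj]; exact e2
    · fin_cases j
      · exact e3.trans (Dexp_apply_inr0 k m n).symm
      · exact e4.trans (Dexp_apply_inr1 k m n).symm
  have hl : (d (Sum.inl 0) = 1 ∧ d (Sum.inl 1) = 0) ∨
      (d (Sum.inl 0) = 0 ∧ d (Sum.inl 1) = 1) := by omega
  have hr : (d (Sum.inr 0) = 2 ∧ d (Sum.inr 1) = 0) ∨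
      (d (Sum.inr 0) = 1 ∧ d (Sum.inr 1) = 1) ∨
      (d (Sum.inr 0) = 0 ∧ d (Sum.inr 1) = 2) := by omega
  rcases hl with ⟨e1, e2⟩ | ⟨e1, e2⟩ <;> rcases hr with ⟨e3, e4⟩ | ⟨e3, e4⟩ | ⟨e3, e4⟩
  · exact Or.inl (hext 0 1 2 0 (by decide) e1 e2 e3 e4)
  · exact Or.inr (Or.inl (hext 0 1 1 1 (by decide) e1 e2 e3 e4))
  · exact Or.inr (Or.inr (Or.inl (hext 0 1 0 2 (by decide) e1 e2 e3 e4)))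
  · exact Or.inr (Or.inr (Or.inr (Or.inl (hext 1 0 2 0 (by decide) e2 e1 e3 e4))))
  · exact Or.inr (Or.inr (Or.inr (Or.inr (Or.inl (hext 1 0 1 1 (by decide) e2 e1 e3 e4)))))
  · exact Or.inr (Or.inr (Or.inr (Or.inr (Or.inr (hext 1 0 0 2 (by decide) e2 e1 e3 e4)))))

lemma repr_bihom {F : MvPolynomial (Fin 2 ⊕ Fin 2) ℂ} (hF : IsBihom 1 2 F) :
    ∃ a₀ a₁ a₂ b₀ b₁ b₂ : ℂ, F = Fp a₀ a₁ a₂ b₀ b₁ b₂ := by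
  refine ⟨coeff (Dexp 0 2 0) F, coeff (Dexp 0 1 1) F, coeff (Dexp 0 0 2) F,
    coeff (Dexp 1 2 0) F, coeff (Dexp 1 1 1) F, coeff (Dexp 1 0 2) F, ?_⟩
  have hFp : Fp (coeff (Dexp 0 2 0) F) (coeff (Dexp 0 1 1) F) (coeff (Dexp 0 0 2) F)
      (coeff (Dexp 1 2 0) F) (coeff (Dexp 1 1 1) F) (coeff (Dexp 1 0 2) F) =
      monomial (Dexp 0 2 0) (coeff (Dexp 0 2 0) F) +
      monomial (Dexp 0 1 1) (coeff (Dexp 0 1 1) F) +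
      monomial (Dexp 0 0 2) (coeff (Dexp 0 0 2) F) +
      monomial (Dexp 1 2 0) (coeff (Dexp 1 2 0) F) +
      monomial (Dexp 1 1 1) (coeff (Dexp 1 1 1) F) +
      monomial (Dexp 1 0 2) (coeff (Dexp 1 0 2) F) := by
    simp only [monomial_Dexp, Fp]
    ring
  rw [hFp]
  apply MvPolynomial.ext
  intro d
  simp only [coeff_add, coeff_monomial]
  by_cases hd : d ∈ F.support
  · rcases support_classify hF hd with rfl | rfl | rfl | rfl | rfl | rfl <;>
      simp [Dexp_eq_iff, Fin.ext_iff]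
  · have hc : coeff d F = 0 := notMem_support_iff.mp hd
    rw [hc]
    have z : ∀ (k : Fin 2) (m n : ℕ),
        (if Dexp k m n = d then coeff (Dexp k m n) F else 0) = 0 := by
      intro k m n
      split
      · next h => rw [h, hc]
      · rfl
    rw [z, z, z, z, z, z]
    ring

lemma Fp_congr {a₀ a₁ a₂ b₀ b₁ b₂ a₀' a₁' a₂' b₀' b₁' b₂' : ℂ}
    (h0 : a₀ = a₀') (h1 : a₁ = a₁') (h2 : a₂ = a₂')
    (h3 : b₀ = b₀') (h4 : b₁ = b₁') (h5 : b₂ = b₂') :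
    Fp a₀ a₁ a₂ b₀ b₁ b₂ = Fp a₀' a₁' a₂' b₀' b₁' b₂' := by
  rw [h0, h1, h2, h3, h4, h5]

lemma complete_vec {s t : ℂ} (hst : ¬(s = 0 ∧ t = 0)) :
    ∃ x y : ℂ, s * y - x * t = 1 := by
  by_cases hs : s = 0
  · have ht : t ≠ 0 := fun h' => hst ⟨hs, h'⟩
    exact ⟨-t⁻¹, 0, by field_simp; simp⟩
  · exact ⟨0, s⁻¹, by field_simp; simp⟩

lemma mv00 (a b c d : ℂ) : !![a, b; c, d] 0 0 = a := by simp
lemma mv01 (a b c d : ℂ) : !![a, b; c, d] 0 1 = b := by simp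
lemma mv10 (a b c d : ℂ) : !![a, b; c, d] 1 0 = c := by simp
lemma mv11 (a b c d : ℂ) : !![a, b; c, d] 1 1 = d := by simp

lemma one_SL2 : (1 : SL2).1 = !![1, 0; 0, 1] := by
  rw [Matrix.SpecialLinearGroup.coe_one, Matrix.one_fin_two]

lemma reduce {a₀ a₁ a₂ b₀ b₁ b₂ : ℂ} (hn : NCR a₀ a₁ a₂ b₀ b₁ b₂) :
    ∃ (g h : SL2) (c : ℂ), c ≠ 0 ∧ biSubst g h (Fp a₀ a₁ a₂ b₀ b₁ b₂) = c • C₀ := by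
  obtain ⟨s, t, α, β, hst, hαβ, e0, e1, e2⟩ := pencil_sq hn
  obtain ⟨x, y, hxy⟩ := complete_vec hst
  obtain ⟨z, w, hzw⟩ := complete_vec (s := β) (t := -α)
    (fun ⟨h1', h2'⟩ => hαβ ⟨by linear_combination -h2', h1'⟩)
  obtain ⟨g₁, hg₁⟩ : ∃ g : SL2, g.1 = !![s, x; t, y] :=
    ⟨⟨_, by rw [Matrix.det_fin_two_of]; linear_combination hxy⟩, rfl⟩
  obtain ⟨h₁, hh₁⟩ : ∃ h : SL2, h.1 = !![β, z; -α, w] :=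
    ⟨⟨_, by rw [Matrix.det_fin_two_of]; linear_combination hzw⟩, rfl⟩
  have hzw' : β * w + α * z = 1 := by linear_combination hzw
  obtain ⟨B0, B1, B2, key1⟩ : ∃ B0 B1 B2 : ℂ,
      biSubst g₁ h₁ (Fp a₀ a₁ a₂ b₀ b₁ b₂) = Fp 0 0 1 B0 B1 B2 := by
    refine ⟨_, _, _, (biSubst_Fp g₁ h₁ _ _ _ _ _ _).trans
      (Fp_congr ?_ ?_ ?_ rfl rfl rfl)⟩ <;>
      simp only [hg₁, hh₁, cp0, cp1, cp2, mv00, mv01, mv10, mv11]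
    · linear_combination β^2 * e0 - α*β * e1 + α^2 * e2
    · linear_combination 2*β*z * e0 + (β*w - α*z) * e1 + (-2*α*w) * e2
    · linear_combination z^2 * e0 + z*w * e1 + w^2 * e2 + (β*w + α*z + 1) * hzw'
  have hn1 : NCR 0 0 1 B0 B1 B2 := NCR_transport g₁ h₁ key1 hn
  have hB0 : B0 ≠ 0 := by
    intro hB
    exact hn1 1 0 (by simp) ⟨by simp [Qd], by simp [Qd, hB]⟩
  obtain ⟨cc, hcc⟩ : ∃ cc : ℂ, 2 * B0 * cc + B1 = 0 :=
    ⟨-B1 / (2 * B0), by field_simp; ring⟩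
  obtain ⟨BB, hBB⟩ : ∃ BB : ℂ, BB + (B0 * cc^2 + B1 * cc + B2) = 0 :=
    ⟨-(B0 * cc^2 + B1 * cc + B2), by ring⟩
  obtain ⟨g₂, hg₂⟩ : ∃ g : SL2, g.1 = !![1, BB; 0, 1] :=
    ⟨⟨_, by rw [Matrix.det_fin_two_of]; ring⟩, rfl⟩
  obtain ⟨h₂, hh₂⟩ : ∃ h : SL2, h.1 = !![1, cc; 0, 1] :=
    ⟨⟨_, by rw [Matrix.det_fin_two_of]; ring⟩, rfl⟩
  have key2 : biSubst g₂ h₂ (Fp 0 0 1 B0 B1 B2) = Fp 0 0 1 B0 0 0 := by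
    refine (biSubst_Fp g₂ h₂ _ _ _ _ _ _).trans (Fp_congr ?_ ?_ ?_ ?_ ?_ ?_) <;>
      simp only [hg₂, hh₂, cp0, cp1, cp2, mv00, mv01, mv10, mv11]
    · ring
    · ring
    · ring
    · ring
    · linear_combination hcc
    · linear_combination hBB
  obtain ⟨lam, hlam⟩ := exists_sqrt B0⁻¹
  have hBinv : B0 * B0⁻¹ = 1 := mul_inv_cancel₀ hB0
  have hlam0 : lam ≠ 0 := by
    intro h'
    rw [h'] at hlam
    apply hB0
    rw [← inv_inv B0, ← hlam]
    norm_num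
  obtain ⟨g₃, hg₃⟩ : ∃ g : SL2, g.1 = !![lam⁻¹, 0; 0, lam] :=
    ⟨⟨_, by rw [Matrix.det_fin_two_of]; field_simp; simp⟩, rfl⟩
  have hlaminv : lam * lam * lam⁻¹ = lam := by field_simp
  have hBlam : lam * B0 = lam⁻¹ := by
    field_simp
    linear_combination B0 * hlam + hBinv
  have key3 : biSubst g₃ 1 (Fp 0 0 1 B0 0 0) = lam⁻¹ • C₀ := by
    rw [C₀_eq, Fp_smul]
    refine (biSubst_Fp g₃ 1 _ _ _ _ _ _).trans (Fp_congr ?_ ?_ ?_ ?_ ?_ ?_) <;>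
      simp only [hg₃, one_SL2, cp0, cp1, cp2, mv00, mv01, mv10, mv11]
    · ring
    · ring
    · ring
    · linear_combination hBlam
    · ring
    · ring
  refine ⟨g₁ * (g₂ * g₃), h₁ * (h₂ * 1), lam⁻¹, inv_ne_zero hlam0, ?_⟩
  have step := congrArg (biSubst g₃ 1) (congrArg (biSubst g₂ h₂) key1)
  rw [key2] at step
  rw [biSubst_biSubst, biSubst_biSubst] at step
  rw [step, key3]

lemma part1 {F F' : MvPolynomial (Fin 2 ⊕ Fin 2) ℂ}
    (hb : IsBihom 1 2 F) (hs : SmoothCurve F)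
    (hb' : IsBihom 1 2 F') (hs' : SmoothCurve F') :
    ∃ (g h : SL2) (c : ℂˣ), biSubst g h F = (c : ℂ) • F' := by
  obtain ⟨a₀, a₁, a₂, b₀, b₁, b₂, rfl⟩ := repr_bihom hb
  obtain ⟨a₀', a₁', a₂', b₀', b₁', b₂', rfl⟩ := repr_bihom hb'
  obtain ⟨g₁, h₁, c₁, hc₁, e₁⟩ := reduce (smooth_NCR hs)
  obtain ⟨g₂, h₂, c₂, hc₂, e₂⟩ := reduce (smooth_NCR hs')
  have hF' : biSubst g₂⁻¹ h₂⁻¹ ((c₂ : ℂ) • C₀) = Fp a₀' a₁' a₂' b₀' b₁' b₂' := by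
    rw [← e₂, biSubst_biSubst, mul_inv_cancel, mul_inv_cancel, biSubst_one]
  have hC : biSubst g₂⁻¹ h₂⁻¹ C₀ = c₂⁻¹ • Fp a₀' a₁' a₂' b₀' b₁' b₂' := by
    rw [← hF', map_smul, smul_smul, inv_mul_cancel₀ hc₂, one_smul]
  refine ⟨g₁ * g₂⁻¹, h₁ * h₂⁻¹, Units.mk0 (c₁ * c₂⁻¹) (by
    exact mul_ne_zero hc₁ (inv_ne_zero hc₂)), ?_⟩
  calc biSubst (g₁ * g₂⁻¹) (h₁ * h₂⁻¹) (Fp a₀ a₁ a₂ b₀ b₁ b₂)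
      = biSubst g₂⁻¹ h₂⁻¹ (biSubst g₁ h₁ (Fp a₀ a₁ a₂ b₀ b₁ b₂)) :=
        (biSubst_biSubst _ _ _ _ _).symm
    _ = biSubst g₂⁻¹ h₂⁻¹ (c₁ • C₀) := by rw [e₁]
    _ = c₁ • biSubst g₂⁻¹ h₂⁻¹ C₀ := map_smul _ _ _
    _ = c₁ • (c₂⁻¹ • Fp a₀' a₁' a₂' b₀' b₁' b₂') := by rw [hC]
    _ = ((Units.mk0 (c₁ * c₂⁻¹) (mul_ne_zero hc₁ (inv_ne_zero hc₂)) : ℂˣ) : ℂ) •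
          Fp a₀' a₁' a₂' b₀' b₁' b₂' := by rw [smul_smul]; rfl

lemma mat2_ext {M : Matrix (Fin 2) (Fin 2) ℂ} {a b c d : ℂ}
    (h0 : M 0 0 = a) (h1 : M 0 1 = b) (h2 : M 1 0 = c) (h3 : M 1 1 = d) :
    M = !![a, b; c, d] := by
  rw [Matrix.eta_fin_two M, h0, h1, h2, h3]

lemma part2 (g h : SL2) :
    (∃ c : ℂˣ, biSubst g h C₀ = (c : ℂ) • C₀) ↔
    ((∃ lam mu : ℂˣ, (lam : ℂ) ^ 2 = (mu : ℂ) ^ 4 ∧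
        g.1 = !![(lam : ℂ)⁻¹, 0; 0, (lam : ℂ)] ∧
        h.1 = !![(mu : ℂ)⁻¹, 0; 0, (mu : ℂ)]) ∨
     (∃ beta gam : ℂˣ, (beta : ℂ) ^ 2 = -(gam : ℂ) ^ 4 ∧
        g.1 = !![0, (beta : ℂ); -(beta : ℂ)⁻¹, 0] ∧
        h.1 = !![0, (gam : ℂ); -(gam : ℂ)⁻¹, 0])) := by
  have hdg := det_entries g
  have hdh := det_entries h
  set A := g.1 0 0 with hA
  set B := g.1 0 1 with hB
  set C' := g.1 1 0 with hC'
  set D := g.1 1 1 with hD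
  set p := h.1 0 0 with hp
  set q := h.1 0 1 with hq
  set r := h.1 1 0 with hr
  set s := h.1 1 1 with hs
  constructor
  · rintro ⟨c, hc⟩
    have hc0 : (c : ℂ) ≠ 0 := c.ne_zero
    rw [C₀_eq] at hc
    rw [biSubst_Fp, Fp_smul] at hc
    obtain ⟨T1, T2, T3, T4, T5, T6⟩ := Fp_inj hc
    simp only [cp0, cp1, cp2, ← hA, ← hB, ← hC', ← hD, ← hp, ← hq, ← hr, ← hs,
      mul_zero, zero_mul, add_zero, zero_add, mul_one, one_mul] at T1 T2 T3 T4 T5 T6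
    have hAr : A * r = 0 := by
      linear_combination (p/2) * T2 - q * T1 - (A*r) * hdh
    have hCp : C' * p = 0 := by
      linear_combination s * T1 - (r/2) * T2 - (C'*p) * hdh
    have hBs : B * s = 0 := by
      linear_combination p * T6 - (q/2) * T5 - (B*s) * hdh
    have hDq : D * q = 0 := by
      linear_combination (s/2) * T5 - r * T6 - (D*q) * hdh
    by_cases hA0 : A = 0
    · right
      have hBC : B * C' = -1 := by linear_combination -hdg + D * hA0
      have hB0 : B ≠ 0 := fun h' => by simp [h', hA0] at hdg
      have hC0 : C' ≠ 0 := fun h' => by simp [h', hA0] at hdg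
      have hp0 : p = 0 := (mul_eq_zero.mp hCp).resolve_left hC0
      have hqr : q * r = -1 := by linear_combination -hdh + s * hp0
      have hq0 : q ≠ 0 := fun h' => by simp [h', hp0] at hdh
      have hr0 : r ≠ 0 := fun h' => by simp [h', hp0] at hdh
      have hD0 : D = 0 := (mul_eq_zero.mp hDq).resolve_right hq0
      have hs0 : s = 0 := (mul_eq_zero.mp hBs).resolve_left hB0
      have T34 : B * r ^ 2 = C' * q ^ 2 := by
        linear_combination T4 - T3 + s^2 * hA0 - p^2 * hD0
      refine ⟨Units.mk0 B hB0, Units.mk0 q hq0, ?_, ?_, ?_⟩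
      · show B ^ 2 = -q ^ 4
        linear_combination B * q^2 * T34 + B^2 * (1 - q*r) * hqr + q^4 * hBC
      · exact mat2_ext hA0 rfl (by simp only [Units.val_mk0]; field_simp; linear_combination hBC) hD0
      · exact mat2_ext hp0 rfl (by simp only [Units.val_mk0]; field_simp; linear_combination hqr) hs0
    · left
      have hr0 : r = 0 := (mul_eq_zero.mp hAr).resolve_left hA0
      have hps : p * s = 1 := by linear_combination hdh + q * hr0
      have hp0 : p ≠ 0 := fun h' => by rw [h'] at hps; simp at hps
      have hs0 : s ≠ 0 := fun h' => by rw [h'] at hps; simp at hps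
      have hC0 : C' = 0 := (mul_eq_zero.mp hCp).resolve_right hp0
      have hAD : A * D = 1 := by linear_combination hdg + B * hC0
      have hD0 : D ≠ 0 := fun h' => by rw [h'] at hAD; simp at hAD
      have hq0 : q = 0 := (mul_eq_zero.mp hDq).resolve_left hD0
      have hB0 : B = 0 := (mul_eq_zero.mp hBs).resolve_right hs0
      refine ⟨Units.mk0 D hD0, Units.mk0 s hs0, ?_, ?_, ?_⟩
      · show D ^ 2 = s ^ 4
        have e3 : A * s^2 = (c : ℂ) := by linear_combination T3 - q^2 * hC0
        have e4 : D * p^2 = (c : ℂ) := by linear_combination T4 - r^2 * hB0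
        linear_combination D*s^2*(e4 - e3) + s^4*hAD - D^2*(p*s+1)*hps
      · exact mat2_ext (by simp only [Units.val_mk0]; field_simp; linear_combination hAD) hB0 hC0 rfl
      · exact mat2_ext (by simp only [Units.val_mk0]; field_simp; linear_combination hps) hq0 hr0 rfl
  · rintro (⟨lam, mu, hrel, hg, hh⟩ | ⟨beta, gam, hrel, hg, hh⟩)
    · refine ⟨Units.mk0 ((lam : ℂ)⁻¹ * (mu : ℂ)^2)
        (mul_ne_zero (inv_ne_zero lam.ne_zero) (pow_ne_zero 2 mu.ne_zero)), ?_⟩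
      rw [C₀_eq, biSubst_Fp, Fp_smul]
      refine Fp_congr ?_ ?_ ?_ ?_ ?_ ?_ <;>
        simp only [hg, hh, cp0, cp1, cp2, mv00, mv01, mv10, mv11, Units.val_mk0]
      · ring
      · ring
      · ring
      · have hl : (lam : ℂ) ≠ 0 := lam.ne_zero
        have hm : (mu : ℂ) ≠ 0 := mu.ne_zero
        field_simp
        linear_combination hrel
      · ring
      · ring
    · refine ⟨Units.mk0 (-(beta : ℂ)⁻¹ * (gam : ℂ)^2)
        (mul_ne_zero (neg_ne_zero.mpr (inv_ne_zero beta.ne_zero))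
          (pow_ne_zero 2 gam.ne_zero)), ?_⟩
      rw [C₀_eq, biSubst_Fp, Fp_smul]
      refine Fp_congr ?_ ?_ ?_ ?_ ?_ ?_ <;>
        simp only [hg, hh, cp0, cp1, cp2, mv00, mv01, mv10, mv11, Units.val_mk0]
      · ring
      · ring
      · ring
      · have hb : (beta : ℂ) ≠ 0 := beta.ne_zero
        have hm : (gam : ℂ) ≠ 0 := gam.ne_zero
        field_simp
        linear_combination hrel
      · ring
      · ring

/-- **Transitivity on smooth `(1,2)` curves and the stabilizer of `C₀`.**
(1) `PGL₂×PGL₂` (equivalently, `SL₂×SL₂` acting projectively) acts transitively on the open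
locus of smooth bidegree `(1,2)` curves on `P¹×P¹`: any two smooth members are equivalent
up to a scalar.
(2) The stabilizer of `C₀ = {X₁Y₂² + Y₁X₂² = 0}`: a pair `(g,h) ∈ SL₂×SL₂` stabilizes `C₀`
(projectively) if and only if it belongs to one of the two explicit families below.
Projectively these are exactly the elements `α ∈ ℂˣ` acting by `[X₁,Y₁] ↦ [X₁, α²Y₁]`,
`[X₂,Y₂] ↦ [X₂, αY₂]` (with `α = μ²`), and their compositions with the involution
`[Xᵢ,Yᵢ] ↦ [Yᵢ,Xᵢ]`; hence the stabilizer in `PGL₂×PGL₂` is `(ℤ/2ℤ) ⋉ ℂ^×`. -/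
theorem transitive_on_smooth_12_curves_and_stabilizer :
    (∀ F F' : MvPolynomial (Fin 2 ⊕ Fin 2) ℂ,
      IsBihom 1 2 F → F ≠ 0 → SmoothCurve F →
      IsBihom 1 2 F' → F' ≠ 0 → SmoothCurve F' →
      ∃ (g h : SL2) (c : ℂˣ), biSubst g h F = (c : ℂ) • F') ∧
    (∀ g h : SL2,
      (∃ c : ℂˣ, biSubst g h C₀ = (c : ℂ) • C₀) ↔
      ((∃ lam mu : ℂˣ, (lam : ℂ) ^ 2 = (mu : ℂ) ^ 4 ∧
          g.1 = !![(lam : ℂ)⁻¹, 0; 0, (lam : ℂ)] ∧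
          h.1 = !![(mu : ℂ)⁻¹, 0; 0, (mu : ℂ)]) ∨
       (∃ beta gam : ℂˣ, (beta : ℂ) ^ 2 = -(gam : ℂ) ^ 4 ∧
          g.1 = !![0, (beta : ℂ); -(beta : ℂ)⁻¹, 0] ∧
          h.1 = !![0, (gam : ℂ); -(gam : ℂ)⁻¹, 0]))) := by
  exact ⟨fun F F' h1 _ h3 h4 _ h6 => part1 h1 h3 h4 h6, part2⟩
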